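/- Let F be a finite production economy with emission tax and (x̄,ȳ,p̄) a V-compliant emission tax equilibrium with tax rate t and rebate shares λ. Define a global quota economy E with the same agents and private firms, a government firm with production set {0} and quota m=−C(x̄,ȳ) (the negative of the equilibrium total net emission), government firm shares equal to the rebate shares λ, and compliance region Z(m) matching V on the non-regulated coordinates. Then (x̄,ȳ,p̄) is a Z(m)-compliant global quota equilibrium of E. -/

import Mathlib

open Finset

noncomputable section

variable {Ω J C : Type*}

/-- Dot product of two commodity vectors. -/
def dotp [Fintype C] (p z : C → ℝ) : ℝ := ∑ i, p i * z i

/-- A finite production economy with quota: consumption sets, global preferences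
(depending on the whole consumption allocation, production profile and price),
endowments, shareholdings, production sets, the set `R` of regulated commodities,
the firms' quotas `m` (the negative of the quota) and a flag `free` recording, for
non-regulated commodities, whether free disposal is allowed. -/
structure QuotaEconomy (Ω J C : Type*) where
  X : Ω → Set (C → ℝ)
  pref : Ω → (Ω → C → ℝ) → (J → C → ℝ) → (C → ℝ) → (C → ℝ) → (C → ℝ) → Prop
  e : Ω → C → ℝ
  θ : Ω → J → ℝ
  Y : J → Set (C → ℝ)
  R : Finset C
  m : J → C → ℝ
  free : C → Prop

variable [Fintype Ω] [Fintype J] [Fintype C]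

/-- Agent `ω`'s wealth: endowment value plus shares of firm profits, where each firm's
profit includes the revenue from its quota on the regulated commodities. -/
def QuotaEconomy.wealth (E : QuotaEconomy Ω J C) (p : C → ℝ) (y : J → C → ℝ) (ω : Ω) : ℝ :=
  dotp p (E.e ω) + ∑ j, E.θ ω j * (dotp p (y j) + ∑ i ∈ E.R, p i * E.m j i)

/-- Aggregate excess demand. -/
def QuotaEconomy.excess (E : QuotaEconomy Ω J C) (x : Ω → C → ℝ) (y : J → C → ℝ) : C → ℝ :=
  fun i => ∑ ω, x ω i - ∑ ω, E.e ω i - ∑ j, y j i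

/-- Quota compliance: consumptions and productions are admissible, excess demand of a
regulated commodity equals the total quota, and excess demand of a non-regulated
commodity is ≤ 0 when free disposal is allowed and = 0 otherwise. -/
def QuotaEconomy.Compliant (E : QuotaEconomy Ω J C) (x : Ω → C → ℝ) (y : J → C → ℝ) : Prop :=
  (∀ ω, x ω ∈ E.X ω) ∧ (∀ j, y j ∈ E.Y j) ∧
  (∀ i ∈ E.R, E.excess x y i = ∑ j, E.m j i) ∧
  (∀ i ∉ E.R, E.excess x y i ≤ 0 ∧ (¬ E.free i → E.excess x y i = 0))

/-- Quota equilibrium: price on the simplex, compliance, profit maximization, and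
demand optimality (strictly preferred bundles are unaffordable). -/
def QuotaEconomy.Equilibrium (E : QuotaEconomy Ω J C) (x : Ω → C → ℝ)
    (y : J → C → ℝ) (p : C → ℝ) : Prop :=
  (∑ i, |p i|) = 1 ∧
  E.Compliant x y ∧
  (∀ j, ∀ z ∈ E.Y j, dotp p z ≤ dotp p (y j)) ∧
  (∀ ω, dotp p (x ω) ≤ E.wealth p y ω) ∧
  (∀ ω, ∀ z ∈ E.X ω, E.pref ω x y p z (x ω) → ¬ dotp p z ≤ E.wealth p y ω)

/-- A finite production economy with emission tax: all firms are private; the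
government levies a tax `t` on the regulated commodities `R` and rebates its revenue
according to the rebate shares `lam`. -/
structure TaxEconomy (Ω J C : Type*) where
  X : Ω → Set (C → ℝ)
  pref : Ω → (Ω → C → ℝ) → (J → C → ℝ) → (C → ℝ) → (C → ℝ) → (C → ℝ) → Prop
  e : Ω → C → ℝ
  θ : Ω → J → ℝ
  Y : J → Set (C → ℝ)
  R : Finset C
  free : C → Prop
  t : C → ℝ
  lam : Ω → ℝ

variable [Fintype Ω] [Fintype J] [Fintype C]

/-- Total net emission of the regulated commodities. -/
def TaxEconomy.emission [DecidableEq C] (F : TaxEconomy Ω J C)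
    (x : Ω → C → ℝ) (y : J → C → ℝ) : C → ℝ :=
  fun i => if i ∈ F.R then (∑ ω, F.e ω i + ∑ j, y j i - ∑ ω, x ω i) else 0

/-- Aggregate excess demand. -/
def TaxEconomy.excess (F : TaxEconomy Ω J C) (x : Ω → C → ℝ) (y : J → C → ℝ) : C → ℝ :=
  fun i => ∑ ω, x ω i - ∑ ω, F.e ω i - ∑ j, y j i

/-- Agent `ω`'s wealth: endowment value, dividends, and her rebate share of the
government's tax revenue `t·C(x,y)`. -/
def TaxEconomy.wealth [DecidableEq C] (F : TaxEconomy Ω J C) (p : C → ℝ)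
    (x : Ω → C → ℝ) (y : J → C → ℝ) (ω : Ω) : ℝ :=
  dotp p (F.e ω) + ∑ j, F.θ ω j * dotp p (y j) +
    F.lam ω * ∑ i ∈ F.R, F.t i * F.emission x y i

/-- Emission tax equilibrium: `π_k(p) = −t`, price on the simplex, profit maximization,
demand optimality, and excess demand in the compliance region `V`. -/
def TaxEconomy.Equilibrium [DecidableEq C] (F : TaxEconomy Ω J C)
    (x : Ω → C → ℝ) (y : J → C → ℝ) (p : C → ℝ) : Prop :=
  (∑ i, |p i|) = 1 ∧
  (∀ i ∈ F.R, p i = - F.t i) ∧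
  (∀ ω, x ω ∈ F.X ω) ∧ (∀ j, y j ∈ F.Y j) ∧
  (∀ j, ∀ z ∈ F.Y j, dotp p z ≤ dotp p (y j)) ∧
  (∀ ω, dotp p (x ω) ≤ F.wealth p x y ω) ∧
  (∀ ω, ∀ z ∈ F.X ω, F.pref ω x y p z (x ω) → ¬ dotp p z ≤ F.wealth p x y ω) ∧
  (∀ i ∈ F.R, F.excess x y i ≤ 0) ∧
  (∀ i ∉ F.R, F.excess x y i ≤ 0 ∧ (¬ F.free i → F.excess x y i = 0))

/-- every emission tax equilibrium is a global quota equilibrium of the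
economy obtained by adding a government firm (index `none`) with production set {0},
quota equal to the negative of the equilibrium total net emission, and government-firm
shares equal to the rebate shares. -/
theorem stmt7 [DecidableEq C] (F : TaxEconomy Ω J C)
    (xe : Ω → C → ℝ) (ye : J → C → ℝ) (pe : C → ℝ)
    (heq : F.Equilibrium xe ye pe) :
    QuotaEconomy.Equilibrium
      (Ω := Ω) (J := Option J) (C := C)
      { X := F.X
        pref := fun ω x y' p a b => F.pref ω x (fun j => y' (some j)) p a b
        e := F.e
        θ := fun ω o => o.elim (F.lam ω) (F.θ ω)
        Y := fun o => o.elim ({0} : Set (C → ℝ)) F.Y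
        R := F.R
        m := fun o => o.elim (fun i => - F.emission xe ye i) (fun _ => (0 : C → ℝ))
        free := F.free }
      xe (fun o => o.elim (0 : C → ℝ) ye) pe := by
  obtain ⟨hs, hpt, hX, hY, hprof, hbud, hopt, hRle, hNR⟩ := heq
  set E : QuotaEconomy Ω (Option J) C :=
      { X := F.X
        pref := fun ω x y' p a b => F.pref ω x (fun j => y' (some j)) p a b
        e := F.e
        θ := fun ω o => o.elim (F.lam ω) (F.θ ω)
        Y := fun o => o.elim ({0} : Set (C → ℝ)) F.Y
        R := F.R
        m := fun o => o.elim (fun i => - F.emission xe ye i) (fun _ => (0 : C → ℝ))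
        free := F.free } with hE
  set ye' : Option J → C → ℝ := fun o => o.elim (0 : C → ℝ) ye with hye'
  have hex : ∀ i, E.excess xe ye' i = F.excess xe ye i := by
    intro i
    simp only [QuotaEconomy.excess, TaxEconomy.excess, hE, hye']
    rw [Fintype.sum_option]
    simp
  have hwealth : ∀ ω, E.wealth pe ye' ω = F.wealth pe xe ye ω := by
    intro ω
    simp only [QuotaEconomy.wealth, TaxEconomy.wealth, hE, hye']
    rw [Fintype.sum_option]
    simp only [Option.elim]
    have h0 : dotp pe (0 : C → ℝ) = 0 := by simp [dotp]
    rw [h0]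
    have hrw : ∑ i ∈ F.R, pe i * -F.emission xe ye i
        = ∑ i ∈ F.R, F.t i * F.emission xe ye i := by
      refine Finset.sum_congr rfl fun i hi => ?_
      rw [hpt i hi]; ring
    rw [hrw]
    simp only [Pi.zero_apply, mul_zero, Finset.sum_const_zero, add_zero, zero_add]
    ring
  refine ⟨hs, ⟨hX, ?_, ?_, ?_⟩, ?_, ?_, ?_⟩
  · rintro (_ | j)
    · simp [hE, hye']
    · exact hY j
  · intro i hi
    rw [hex i]
    simp only [hE]
    rw [Fintype.sum_option]
    simp only [Option.elim, Pi.zero_apply, Finset.sum_const_zero, add_zero]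
    simp only [TaxEconomy.excess, TaxEconomy.emission, if_pos (show i ∈ F.R from hi)]
    ring
  · intro i hi
    rw [hex i]
    exact hNR i hi
  · rintro (_ | j) z hz
    · simp only [hE, Set.mem_singleton_iff] at hz
      subst hz; simp [hye']
    · exact hprof j z hz
  · intro ω; rw [hwealth ω]; exact hbud ω
  · intro ω z hz hpref
    rw [hwealth ω]
    exact hopt ω z hz hpref
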